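/- Let H be a real Hilbert space with dim H ≥ 2 and let φ : H → ℝ be a function such that for every nonempty closed convex set C ⊆ H, the infimum of φ over C is attained at the projection of 0 onto C. Then φ is radially increasing: for all x, y ∈ H, if ‖x‖ < ‖y‖ then φ(x) ≤ φ(y). -/

import Mathlib

/-- `p` is the metric projection of `x` onto `C`. -/
def IsProj {E : Type*} [NormedAddCommGroup E] (C : Set E) (x p : E) : Prop :=
  p ∈ C ∧ ∀ y ∈ C, ‖x - p‖ ≤ ‖x - y‖

open Real

/-- In a space of rank ≥ 2, every unit vector has a unit orthogonal companion. -/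
lemma exists_unit_orth {H : Type*} [NormedAddCommGroup H] [InnerProductSpace ℝ H]
    (hdim : 2 ≤ Module.rank ℝ H) (u : H) (hu : ‖u‖ = 1) :
    ∃ w : H, ‖w‖ = 1 ∧ inner (𝕜 := ℝ) u w = 0 := by
  have hspan : (Submodule.span ℝ ({u} : Set H)) ≠ ⊤ := by
    intro htop
    have h1 : Module.rank ℝ (Submodule.span ℝ ({u} : Set H)) ≤ 1 := by
      simpa using rank_span_le (R := ℝ) ({u} : Set H)
    rw [htop, rank_top] at h1
    exact absurd (hdim.trans h1) (by norm_num)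
  obtain ⟨v, hv⟩ : ∃ v : H, v ∉ Submodule.span ℝ ({u} : Set H) := by
    by_contra h
    push_neg at h
    exact hspan (Submodule.eq_top_iff'.mpr h)
  set w0 : H := v - (inner (𝕜 := ℝ) u v) • u with hw0
  have huu : (inner (𝕜 := ℝ) u u) = 1 := by
    rw [real_inner_self_eq_norm_sq, hu]; norm_num
  have hw0_ne : w0 ≠ 0 := by
    intro h
    apply hv
    have hveq : v = (inner (𝕜 := ℝ) u v) • u := by
      have := sub_eq_zero.mp (hw0 ▸ h)
      · exact this
    rw [hveq]
    exact Submodule.smul_mem _ _ (Submodule.mem_span_singleton_self u)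
  have hw0_orth : inner (𝕜 := ℝ) u w0 = 0 := by
    rw [hw0, inner_sub_right, real_inner_smul_right, huu]
    ring
  refine ⟨‖w0‖⁻¹ • w0, ?_, ?_⟩
  · rw [norm_smul, norm_inv, norm_norm, inv_mul_cancel₀ (norm_ne_zero_iff.mpr hw0_ne)]
  · rw [real_inner_smul_right, hw0_orth, mul_zero]

set_option maxHeartbeats 1000000 in
theorem radially_increasing
    {H : Type*} [NormedAddCommGroup H] [InnerProductSpace ℝ H] [CompleteSpace H]
    (hdim : 2 ≤ Module.rank ℝ H) (φ : H → ℝ)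
    (hφ : ∀ C : Set H, C.Nonempty → IsClosed C → Convex ℝ C →
      ∀ p, IsProj C 0 p → ∀ y ∈ C, φ p ≤ φ y) :
    ∀ x y : H, ‖x‖ < ‖y‖ → φ x ≤ φ y := by
  -- Step lemma: if ⟪p,q⟫ ≥ ‖p‖², then φ p ≤ φ q (via the halfspace {z | ⟪p,z⟫ ≥ ‖p‖²}).
  have step : ∀ p q : H, ‖p‖ ^ 2 ≤ inner (𝕜 := ℝ) p q → φ p ≤ φ q := by
    intro p q hpq
    set C : Set H := {z | ‖p‖ ^ 2 ≤ inner (𝕜 := ℝ) p z} with hC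
    have hC_closed : IsClosed C :=
      isClosed_le continuous_const ((innerSL ℝ p).continuous)
    have hC_convex : Convex ℝ C := by
      intro z1 h1 z2 h2 s t hs ht hst
      simp only [hC, Set.mem_setOf_eq] at h1 h2 ⊢
      rw [inner_add_right, real_inner_smul_right, real_inner_smul_right]
      nlinarith
    have hmem : p ∈ C := by
      simp only [hC, Set.mem_setOf_eq, real_inner_self_eq_norm_sq]
      nlinarith [norm_nonneg p]
    have hproj : IsProj C 0 p := by
      refine ⟨hmem, fun z hz => ?_⟩
      simp only [zero_sub, norm_neg]
      have h1 : (inner (𝕜 := ℝ) p z : ℝ) ≤ ‖p‖ * ‖z‖ := real_inner_le_norm p z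
      have h2 : ‖p‖ ^ 2 ≤ inner (𝕜 := ℝ) p z := hz
      nlinarith [norm_nonneg p, norm_nonneg z]
    exact hφ C ⟨p, hmem⟩ hC_closed hC_convex p hproj q hpq
  intro x y hxy
  by_cases hx0 : x = 0
  · apply step
    simp [hx0]
  -- Set up notation
  set a : ℝ := ‖x‖ with ha
  set b : ℝ := ‖y‖ with hb
  have ha0 : 0 < a := norm_pos_iff.mpr hx0
  have hb0 : 0 < b := lt_trans ha0 hxy
  set u : H := a⁻¹ • x with hu_def
  have hu : ‖u‖ = 1 := by
    rw [hu_def, norm_smul, norm_inv, Real.norm_of_nonneg (le_of_lt ha0)]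
    field_simp; rfl
  have huu : (inner (𝕜 := ℝ) u u) = 1 := by
    rw [real_inner_self_eq_norm_sq, hu]; norm_num
  set c : ℝ := inner (𝕜 := ℝ) u y with hc_def
  set y' : H := y - c • u with hy'_def
  have huy' : inner (𝕜 := ℝ) u y' = 0 := by
    rw [hy'_def, inner_sub_right, real_inner_smul_right, huu]
    ring
  set s : ℝ := ‖y'‖ with hs_def
  have hs0 : 0 ≤ s := norm_nonneg _
  -- get a unit vector w orthogonal to u with y = c • u + s • w
  obtain ⟨w, hw, huw⟩ : ∃ w : H, ‖w‖ = 1 ∧ inner (𝕜 := ℝ) u w = 0 ∧ y = c • u + s • w := by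
    by_cases hy'0 : y' = 0
    · obtain ⟨w, hw1, hw2⟩ := exists_unit_orth hdim u hu
      refine ⟨w, hw1, hw2, ?_⟩
      have : s = 0 := by rw [hs_def, hy'0, norm_zero]
      rw [this, zero_smul, add_zero]
      exact sub_eq_zero.mp (by rw [← hy'_def]; exact hy'0)
    · have hs0' : 0 < s := norm_pos_iff.mpr hy'0
      refine ⟨s⁻¹ • y', ?_, ?_, ?_⟩
      · rw [norm_smul, norm_inv, Real.norm_of_nonneg hs0]
        field_simp; rfl
      · rw [real_inner_smul_right, huy', mul_zero]
      · rw [smul_inv_smul₀ (ne_of_gt hs0'), hy'_def]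
        abel
  obtain ⟨huw, hydecomp⟩ := huw
  have hwu : inner (𝕜 := ℝ) w u = 0 := by rw [real_inner_comm]; exact huw
  have hww : inner (𝕜 := ℝ) w w = 1 := by
    rw [real_inner_self_eq_norm_sq, hw]; norm_num
  have hcs : c ^ 2 + s ^ 2 = b ^ 2 := by
    have h1 : inner (𝕜 := ℝ) y y = c ^ 2 + s ^ 2 := by
      conv_lhs => rw [hydecomp]
      simp only [inner_add_left, inner_add_right, real_inner_smul_left,
        real_inner_smul_right, huu, huw, hwu, hww]
      ring
    rw [real_inner_self_eq_norm_sq, ← hb] at h1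
    linarith
  have hcb2 : c / b ≤ 1 := by
    rw [div_le_one hb0]
    nlinarith [sq_nonneg s, sq_nonneg (c - b)]
  have hcb1 : -1 ≤ c / b := by
    rw [le_div_iff₀ hb0]
    nlinarith [sq_nonneg s, sq_nonneg (c + b)]
  set Θ : ℝ := Real.arccos (c / b) with hΘ_def
  have hcos : Real.cos Θ = c / b := Real.cos_arccos hcb1 hcb2
  have hsin : Real.sin Θ = s / b := by
    rw [hΘ_def, Real.sin_arccos]
    have h2 : 1 - (c / b) ^ 2 = (s / b) ^ 2 := by
      field_simp
      nlinarith [hcs]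
    rw [h2, Real.sqrt_sq (by positivity)]
  have hΘ0 : 0 ≤ Θ := Real.arccos_nonneg _
  have hΘπ : Θ ≤ π := Real.arccos_le_pi _
  have hba : 0 < b - a := by linarith
  -- choose the number of steps
  obtain ⟨m, hm⟩ := exists_nat_ge (b * π ^ 2 / (2 * (b - a)))
  set n : ℕ := m + 1 with hn_def
  have hn_pos : 0 < (n : ℝ) := by positivity
  have hkey : b * π ^ 2 / 2 ≤ (n : ℝ) * (b - a) := by
    have h1 : b * π ^ 2 / (2 * (b - a)) ≤ (n : ℝ) := by
      refine hm.trans ?_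
      exact_mod_cast Nat.le_succ m
    rw [div_le_iff₀ (by positivity)] at h1
    linarith
  -- the chain of points
  set r : ℕ → ℝ := fun k => a + k * (b - a) / n with hr_def
  set e : ℝ → H := fun t => Real.cos t • u + Real.sin t • w with he_def
  set z : ℕ → H := fun k => r k • e (k * Θ / n) with hz_def
  have he : ∀ t₁ t₂ : ℝ, inner (𝕜 := ℝ) (e t₁) (e t₂) = Real.cos (t₁ - t₂) := by
    intro t₁ t₂
    simp only [he_def, inner_add_left, inner_add_right, real_inner_smul_left,
      real_inner_smul_right, huu, huw, hwu, hww, Real.cos_sub]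
    ring
  have hz_inner : ∀ k j : ℕ,
      inner (𝕜 := ℝ) (z k) (z j) = r k * r j * Real.cos ((k : ℝ) * Θ / n - j * Θ / n) := by
    intro k j
    simp only [hz_def]
    rw [real_inner_smul_left, real_inner_smul_right, he]
    ring
  have hr_nonneg : ∀ k : ℕ, 0 ≤ r k := by
    intro k
    simp only [hr_def]
    positivity
  have hz_norm_sq : ∀ k : ℕ, ‖z k‖ ^ 2 = r k ^ 2 := by
    intro k
    rw [← real_inner_self_eq_norm_sq, hz_inner, sub_self, Real.cos_zero]
    ring
  have hr_le_b : ∀ k : ℕ, k ≤ n → r k ≤ b := by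
    intro k hk
    have hkn : (k : ℝ) ≤ n := by exact_mod_cast hk
    simp only [hr_def]
    have h1 : (k : ℝ) * (b - a) / n ≤ b - a := by
      rw [div_le_iff₀ hn_pos]
      have := mul_le_mul_of_nonneg_right hkn hba.le
      linarith
    linarith
  have hkey2 : ∀ k : ℕ, k + 1 ≤ n → r k ≤ r (k + 1) * Real.cos (Θ / n) := by
    intro k hk
    have hcosb : 1 - (Θ / n) ^ 2 / 2 ≤ Real.cos (Θ / n) := Real.one_sub_sq_div_two_le_cos
    have hΘsq : Θ ^ 2 ≤ π ^ 2 := by nlinarith [Real.pi_nonneg]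
    have hbt : b * (Θ / n) ^ 2 / 2 ≤ (b - a) / n := by
      have h6 : b * Θ ^ 2 ≤ 2 * ((n : ℝ) * (b - a)) := by
        nlinarith [mul_le_mul_of_nonneg_left hΘsq hb0.le]
      have h7 := mul_le_mul_of_nonneg_right h6 hn_pos.le
      have e1 : b * (Θ / n) ^ 2 / 2 = b * Θ ^ 2 / (2 * (n : ℝ) ^ 2) := by
        rw [div_pow]; ring
      rw [e1, div_le_div_iff₀ (by positivity) hn_pos]
      nlinarith [h7]
    have h4 : r (k + 1) * (1 - (Θ / n) ^ 2 / 2) ≤ r (k + 1) * Real.cos (Θ / n) :=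
      mul_le_mul_of_nonneg_left hcosb (hr_nonneg _)
    have h5 : r (k + 1) - r k = (b - a) / n := by
      simp only [hr_def]
      push_cast
      ring
    nlinarith [hr_le_b (k + 1) hk, hr_nonneg (k + 1), sq_nonneg (Θ / n), hb0.le,
      mul_le_mul_of_nonneg_right (hr_le_b (k + 1) hk)
        (by positivity : (0:ℝ) ≤ (Θ / n) ^ 2 / 2)]
  have hstep_cond : ∀ k : ℕ, k + 1 ≤ n → ‖z k‖ ^ 2 ≤ inner (𝕜 := ℝ) (z k) (z (k + 1)) := by
    intro k hk
    rw [hz_norm_sq, hz_inner]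
    have hang : (k : ℝ) * Θ / n - ((k + 1 : ℕ) : ℝ) * Θ / n = -(Θ / n) := by
      push_cast
      ring
    rw [hang, Real.cos_neg]
    nlinarith [mul_le_mul_of_nonneg_left (hkey2 k hk) (hr_nonneg k)]
  have hz0 : z 0 = x := by
    simp only [hz_def, hr_def, Nat.cast_zero, zero_mul, zero_div, add_zero, he_def,
      Real.cos_zero, Real.sin_zero, one_smul, zero_smul, add_zero, mul_zero]
    rw [hu_def, smul_inv_smul₀ (ne_of_gt ha0)]
  have hzn : z n = y := by
    have hrn : r n = b := by
      simp only [hr_def]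
      field_simp; ring
    have hαn : (n : ℝ) * Θ / n = Θ := by field_simp
    simp only [hz_def]
    rw [hrn, hαn]
    simp only [he_def]
    rw [hcos, hsin, hydecomp, smul_add]
    have hbc : b * (c / b) = c := by field_simp
    have hbs : b * (s / b) = s := by field_simp
    congr 1
    · rw [smul_smul, hbc]
    · rw [smul_smul, hbs]
  have hmain : ∀ k : ℕ, k ≤ n → φ (z 0) ≤ φ (z k) := by
    intro k
    induction k with
    | zero => intro _; exact le_refl _
    | succ k ih =>
      intro hk
      exact (ih (Nat.le_of_succ_le hk)).trans (step (z k) (z (k + 1)) (hstep_cond k hk))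
  have hfin := hmain n le_rfl
  rwa [hz0, hzn] at hfin
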